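/- arXiv:2006.07554 — 5 statements merged into one kernel-verified Lean document; each statement's English description precedes it below -/
import Mathlib

section
/- Let ψ ∈ ℝⁿ be a fixed agent parameter, let f : ℝ → ℝⁿ be the hyper-parameter-to-update map η ↦ f(η) (the off-policy update f(ψ, D, η) with ψ and the replay buffer D held fixed), and let L : ℝⁿ → ℝ be the meta-objective, which does not depend explicitly on the hyper-parameter (so ∇_η L = 0). Assume f is continuously differentiable, L is continuously differentiable, and the composite map g : ℝ → ℝ, g(η) = L(ψ + f(η)), is twice differentiable with globally bounded second derivative. Then the expected ES hyper-parameter update satisfies lim_{σ → 0⁺} (1/σ) ∫_ℝ g(μ + σ·ε) · ε dγ(ε) = ⟪∇L(ψ + f(μ)), f′(μ)⟫, where γ is the standard Gaussian measure on ℝ (mean 0, variance 1) and ⟪·,·⟫ is the Euclidean inner product on ℝⁿ. (This is Proposition 1: in the small-variance limit, the expected Evolutionary-Strategies update of the hyper-parameter mean equals the meta-gradient [∇_ψ L(ψ)]_{ψ = ψ_t + f(ψ_t, D, μ)} [∇_μ f(ψ_t, D, μ)].) -/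
open MeasureTheory ProbabilityTheory Filter Real
open scoped RealInnerProductSpace

section Aux

open Set Asymptotics

private lemma oht_pdf_eq (x : ℝ) :
    gaussianPDFReal 0 1 x = (Real.sqrt (2*π))⁻¹ * Real.exp (-(1/2) * x^2) := by
  simp only [gaussianPDFReal, NNReal.coe_one, mul_one, sub_zero]
  ring_nf

private lemma oht_transfer (φ : ℝ → ℝ) :
    ∫ x, φ x ∂(gaussianReal 0 1) = ∫ x, gaussianPDFReal 0 1 x * φ x := by
  rw [gaussianReal_of_var_ne_zero _ one_ne_zero]
  unfold gaussianPDF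
  simp only [ENNReal.ofReal]
  rw [integral_withDensity_eq_integral_smul
    ((measurable_gaussianPDFReal 0 1).real_toNNReal) φ]
  congr 1; ext x
  rw [NNReal.smul_def, smul_eq_mul, Real.coe_toNNReal _ (gaussianPDFReal_nonneg 0 1 x)]

private lemma oht_integrable (φ : ℝ → ℝ)
    (h : Integrable (fun x => gaussianPDFReal 0 1 x * φ x)) :
    Integrable φ (gaussianReal 0 1) := by
  rw [gaussianReal_of_var_ne_zero _ one_ne_zero]
  unfold gaussianPDF
  simp only [ENNReal.ofReal]
  rw [integrable_withDensity_iff_integrable_smul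
    ((measurable_gaussianPDFReal 0 1).real_toNNReal)]
  convert h using 2 with x
  · rfl
  rw [NNReal.smul_def, smul_eq_mul, Real.coe_toNNReal _ (gaussianPDFReal_nonneg 0 1 x)]

private lemma oht_tendsto_xexp_top :
    Tendsto (fun x : ℝ => -x * Real.exp (-(1/2) * x^2)) atTop (nhds 0) := by
  have h := rpow_mul_exp_neg_mul_sq_isLittleO_exp_neg (b := 1/2) (by norm_num) 1
  have h2 : (fun x : ℝ => -x * Real.exp (-(1/2) * x^2)) =O[atTop]
      fun x => Real.exp (-(1/2) * x) := by
    refine (IsBigO.trans ?_ h.isBigO)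
    apply IsBigO.of_bound 1
    filter_upwards [eventually_gt_atTop (0:ℝ)] with x hx
    simp [Real.rpow_one, abs_mul, Real.abs_exp, abs_of_pos hx, neg_mul]
  have h3 : Tendsto (fun x : ℝ => -(1/2) * x) atTop atBot := by
    have := tendsto_neg_atTop_atBot.comp (tendsto_id.const_mul_atTop
      (by norm_num : (0:ℝ) < 1/2))
    simpa [Function.comp_def, neg_mul] using this
  exact h2.trans_tendsto (Real.tendsto_exp_atBot.comp h3)

private lemma oht_hasDeriv_F (x : ℝ) :
    HasDerivAt (fun x : ℝ => -x * Real.exp (-(1/2) * x^2))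
      ((x^2 - 1) * Real.exp (-(1/2) * x^2)) x := by
  have h1 : HasDerivAt (fun x : ℝ => -(1/2) * x^2) (-(1/2) * (2*x)) x := by
    simpa using ((hasDerivAt_pow 2 x).const_mul (-(1/2:ℝ)))
  have h3 := ((hasDerivAt_id x).neg.mul h1.exp)
  convert h3 using 1
  · rfl
  · rfl
  · rfl
  simp only [Pi.neg_apply, id_eq]
  ring

private lemma oht_int_sq : Integrable (fun x : ℝ => x^2 * Real.exp (-(1/2) * x^2)) := by
  have := integrable_rpow_mul_exp_neg_mul_sq (b := 1/2) (by norm_num) (s := 2) (by norm_num)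
  have e : ∀ x : ℝ, x ^ (2:ℝ) = x ^ (2:ℕ) := fun x => by rw [← Real.rpow_natCast]; norm_num
  simpa [e] using this

private lemma oht_int_cube : Integrable (fun x : ℝ => |x|^3 * Real.exp (-(1/2) * x^2)) := by
  have h := (integrable_rpow_mul_exp_neg_mul_sq (b := 1/2) (by norm_num) (s := 3) (by norm_num))
  have e : ∀ x : ℝ, x ^ (3:ℝ) = x ^ (3:ℕ) := fun x => by rw [← Real.rpow_natCast]; norm_num
  simp only [e] at h
  have := h.abs
  simpa [abs_mul, abs_pow, Real.abs_exp] using this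

private lemma oht_fst_moment : ∫ x : ℝ, x * Real.exp (-(1/2) * x^2) = 0 := by
  have h := integral_neg_eq_self (fun x : ℝ => x * Real.exp (-(1/2) * x^2)) (volume)
  simp only [neg_mul, neg_sq, neg_neg] at h
  have h2 : ∫ x : ℝ, -(x * Real.exp (-(1/2) * x^2)) = ∫ x : ℝ, x * Real.exp (-(1/2) * x^2) := by
    simpa using h
  rw [integral_neg] at h2
  linarith

private lemma oht_snd_moment : ∫ x : ℝ, x^2 * Real.exp (-(1/2) * x^2) = Real.sqrt (2*π) := by
  set F := fun x : ℝ => -x * Real.exp (-(1/2) * x^2) with hF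
  set F' := fun x : ℝ => (x^2 - 1) * Real.exp (-(1/2) * x^2) with hF'
  have hint2 := oht_int_sq
  have hinte : Integrable (fun x : ℝ => Real.exp (-(1/2) * x^2)) :=
    integrable_exp_neg_mul_sq (by norm_num)
  have hintF' : Integrable F' := by
    have := hint2.sub hinte
    simpa [hF', sub_mul, Pi.sub_def] using this
  have htop : Tendsto F atTop (nhds 0) := oht_tendsto_xexp_top
  have hbot : Tendsto F atBot (nhds 0) := by
    have h1 : (fun x : ℝ => F (-x)) = fun x : ℝ => -(F x) := by
      funext x; simp [hF]
    have h4 : Tendsto (fun x : ℝ => F (-x)) atTop (nhds 0) := by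
      rw [h1]; simpa using htop.neg
    have h5 := h4.comp tendsto_neg_atBot_atTop
    simpa [Function.comp_def] using h5
  have hIoi : ∫ x in Ioi (0:ℝ), F' x = 0 - F 0 :=
    integral_Ioi_of_hasDerivAt_of_tendsto' (fun x _ => oht_hasDeriv_F x)
      hintF'.integrableOn htop
  have hIic : ∫ x in Iic (0:ℝ), F' x = F 0 - 0 :=
    integral_Iic_of_hasDerivAt_of_tendsto' (fun x _ => oht_hasDeriv_F x)
      hintF'.integrableOn hbot
  have hsum : ∫ x : ℝ, F' x = 0 := by
    rw [← intervalIntegral.integral_Iic_add_Ioi hintF'.integrableOn hintF'.integrableOn,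
      hIoi, hIic]
    ring
  have hexp : ∫ x : ℝ, Real.exp (-(1/2) * x^2) = Real.sqrt (2*π) := by
    rw [integral_gaussian]
    rw [show π/(1/2) = 2*π by ring]
  have hsplit : ∫ x : ℝ, F' x =
      (∫ x : ℝ, x^2 * Real.exp (-(1/2) * x^2)) - ∫ x : ℝ, Real.exp (-(1/2) * x^2) := by
    rw [← integral_sub hint2 hinte]
    congr 1; funext x; simp [hF']; ring
  rw [hsplit] at hsum
  linarith [hexp, hsum]

private lemma oht_sqrt_pos : 0 < Real.sqrt (2*π) :=
  Real.sqrt_pos.2 (by positivity)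

private lemma oht_i1 : Integrable (fun x : ℝ => x) (gaussianReal 0 1) := by
  apply oht_integrable
  have : Integrable (fun x : ℝ => (Real.sqrt (2*π))⁻¹ * (x * Real.exp (-(1/2) * x^2))) :=
    (integrable_mul_exp_neg_mul_sq (by norm_num)).const_mul _
  refine this.congr ?_
  filter_upwards with x
  rw [oht_pdf_eq]; ring

private lemma oht_i2 : Integrable (fun x : ℝ => x^2) (gaussianReal 0 1) := by
  apply oht_integrable
  have : Integrable (fun x : ℝ => (Real.sqrt (2*π))⁻¹ * (x^2 * Real.exp (-(1/2) * x^2))) :=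
    oht_int_sq.const_mul _
  refine this.congr ?_
  filter_upwards with x
  rw [oht_pdf_eq]; ring

private lemma oht_i3 : Integrable (fun x : ℝ => |x|^3) (gaussianReal 0 1) := by
  apply oht_integrable
  have : Integrable (fun x : ℝ => (Real.sqrt (2*π))⁻¹ * (|x|^3 * Real.exp (-(1/2) * x^2))) :=
    oht_int_cube.const_mul _
  refine this.congr ?_
  filter_upwards with x
  rw [oht_pdf_eq]; ring

private lemma oht_m1 : ∫ x : ℝ, x ∂(gaussianReal 0 1) = 0 := by
  rw [oht_transfer]
  have : (fun x : ℝ => gaussianPDFReal 0 1 x * x)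
      = fun x : ℝ => (Real.sqrt (2*π))⁻¹ * (x * Real.exp (-(1/2) * x^2)) := by
    funext x; rw [oht_pdf_eq]; ring
  rw [this, integral_const_mul, oht_fst_moment, mul_zero]

private lemma oht_m2 : ∫ x : ℝ, x^2 ∂(gaussianReal 0 1) = 1 := by
  rw [oht_transfer]
  have : (fun x : ℝ => gaussianPDFReal 0 1 x * x^2)
      = fun x : ℝ => (Real.sqrt (2*π))⁻¹ * (x^2 * Real.exp (-(1/2) * x^2)) := by
    funext x; rw [oht_pdf_eq]; ring
  rw [this, integral_const_mul, oht_snd_moment, inv_mul_cancel₀ (ne_of_gt oht_sqrt_pos)]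

private lemma oht_taylor_bd (g : ℝ → ℝ) (hg1 : ∀ x : ℝ, DifferentiableAt ℝ g x)
    (hg2 : ∀ x : ℝ, DifferentiableAt ℝ (deriv g) x)
    (M : ℝ) (hM : ∀ x : ℝ, |deriv (deriv g) x| ≤ M) (μ y : ℝ) :
    |g y - g μ - deriv g μ * (y - μ)| ≤ M * (y - μ)^2 := by
  have hM0 : 0 ≤ M := le_trans (abs_nonneg _) (hM 0)
  have hlip : LipschitzWith M.toNNReal (deriv g) := by
    apply lipschitzWith_of_nnnorm_deriv_le (fun x => hg2 x)
    intro x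
    rw [← NNReal.coe_le_coe]
    simpa [Real.coe_toNNReal _ hM0] using hM x
  set h := fun t : ℝ => g t - deriv g μ * t with hh
  have hd : ∀ t : ℝ, HasDerivAt h (deriv g t - deriv g μ) t := by
    intro t
    have := ((hg1 t).hasDerivAt).sub ((hasDerivAt_id t).const_mul (deriv g μ))
    simpa [hh, Pi.sub_def] using this
  have key : ‖h y - h μ‖ ≤ (M * |y - μ|) * ‖y - μ‖ := by
    apply Convex.norm_image_sub_le_of_norm_hasDerivWithin_le
      (f' := fun t => deriv g t - deriv g μ) (s := segment ℝ μ y)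
      (fun t ht => ((hd t).hasDerivWithinAt)) ?_ (convex_segment μ y)
      (left_mem_segment ℝ μ y) (right_mem_segment ℝ μ y)
    intro t ht
    obtain ⟨a, b, ha, hb, hab, rfl⟩ := ht
    have hbm : a • μ + b • y - μ = b * (y - μ) := by
      have : a = 1 - b := by linarith
      simp [this]; ring
    calc ‖deriv g (a • μ + b • y) - deriv g μ‖ ≤ M.toNNReal * ‖(a • μ + b • y) - μ‖ := by
          simpa [dist_eq_norm] using hlip.dist_le_mul (a • μ + b • y) μ
      _ ≤ M * |y - μ| := by
          rw [hbm]
          simp only [Real.coe_toNNReal _ hM0, Real.norm_eq_abs, abs_mul]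
          have hbb : |b| = b := abs_of_nonneg hb
          have hb1 : b ≤ 1 := by linarith
          rw [hbb]
          nlinarith [mul_nonneg hM0 (mul_nonneg (sub_nonneg.2 hb1) (abs_nonneg (y - μ)))]
  have heq : h y - h μ = g y - g μ - deriv g μ * (y - μ) := by simp [hh]; ring
  rw [heq] at key
  calc |g y - g μ - deriv g μ * (y - μ)| ≤ (M * |y - μ|) * |y - μ| := key
    _ = M * (y - μ)^2 := by rw [mul_assoc, abs_mul_abs_self]; ring

end Aux

/-- Proposition 1 of the paper: for fixed agent parameter `ψ ∈ ℝⁿ`, a continuously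
differentiable hyper-parameter-to-update map `f : ℝ → ℝⁿ` and a continuously differentiable
meta-objective `L : ℝⁿ → ℝ` (with no explicit dependence on the hyper-parameter), if the
composite `g(η) = L(ψ + f(η))` is twice differentiable with globally bounded second
derivative, then the expected ES hyper-parameter update satisfies
`lim_{σ→0⁺} (1/σ) ∫ g(μ + σε) ε dγ(ε) = ⟪∇L(ψ + f(μ)), f′(μ)⟫`,
where `γ` is the standard Gaussian measure on `ℝ`. -/
theorem oht_es_meta_gradient_limit (n : ℕ)
    (ψ : EuclideanSpace ℝ (Fin n)) (f : ℝ → EuclideanSpace ℝ (Fin n))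
    (L : EuclideanSpace ℝ (Fin n) → ℝ) (μ : ℝ)
    (hf : ContDiff ℝ 1 f) (hL : ContDiff ℝ 1 L)
    (g : ℝ → ℝ) (hg : g = fun η => L (ψ + f η))
    (hg1 : ∀ x : ℝ, DifferentiableAt ℝ g x)
    (hg2 : ∀ x : ℝ, DifferentiableAt ℝ (deriv g) x)
    (M : ℝ) (hM : ∀ x : ℝ, |deriv (deriv g) x| ≤ M) :
    Filter.Tendsto
      (fun σ : ℝ => (1 / σ) * ∫ ε : ℝ, g (μ + σ * ε) * ε ∂(gaussianReal 0 1))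
      (nhdsWithin 0 (Set.Ioi 0))
      (nhds ⟪gradient L (ψ + f μ), deriv f μ⟫) := by
  have hM0 : 0 ≤ M := le_trans (abs_nonneg _) (hM 0)
  -- the limit equals deriv g μ
  have hderiv : deriv g μ = ⟪gradient L (ψ + f μ), deriv f μ⟫ := by
    have hfd : HasDerivAt (fun η => ψ + f η) (deriv f μ) μ :=
      ((hf.differentiable one_ne_zero μ).hasDerivAt).const_add ψ
    have hLd : HasGradientAt L (gradient L (ψ + f μ)) (ψ + f μ) :=
      (hL.differentiable one_ne_zero (ψ + f μ)).hasGradientAt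
    have hLf := hasGradientAt_iff_hasFDerivAt.mp hLd
    have hcomp := hLf.comp_hasDerivAt μ hfd
    rw [hg]
    have : deriv (fun η => L (ψ + f η)) μ = deriv (L ∘ fun η => ψ + f η) μ := rfl
    rw [this, hcomp.deriv]
    simp [InnerProductSpace.toDual_apply_apply]
  rw [← hderiv]
  set d := deriv g μ with hd
  set C := ∫ ε : ℝ, |ε|^3 ∂(gaussianReal 0 1) with hC
  have hC0 : 0 ≤ C := integral_nonneg (fun x => by positivity)
  have hgc : Continuous g := by
    rw [continuous_iff_continuousAt]; exact fun x => (hg1 x).continuousAt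
  -- key estimate for σ > 0
  have key : ∀ σ : ℝ, 0 < σ →
      ‖(1 / σ) * (∫ ε : ℝ, g (μ + σ * ε) * ε ∂(gaussianReal 0 1)) - d‖ ≤ M * C * σ := by
    intro σ hσ
    set γ := gaussianReal 0 1
    set R := fun ε : ℝ => (g (μ + σ * ε) - g μ - d * (σ * ε)) * ε with hR
    have hRbd : ∀ ε : ℝ, ‖R ε‖ ≤ (M * σ^2) * |ε|^3 := by
      intro ε
      have ht := oht_taylor_bd g hg1 hg2 M hM μ (μ + σ * ε)
      have h1 : μ + σ * ε - μ = σ * ε := by ring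
      rw [h1] at ht
      have : ‖R ε‖ = |g (μ + σ * ε) - g μ - d * (σ * ε)| * |ε| := by
        rw [hR, Real.norm_eq_abs, abs_mul]
      rw [this]
      calc |g (μ + σ * ε) - g μ - d * (σ * ε)| * |ε| ≤ (M * (σ * ε)^2) * |ε| := by
            apply mul_le_mul_of_nonneg_right ht (abs_nonneg _)
        _ = (M * σ^2) * |ε|^3 := by
            rw [mul_pow, ← sq_abs ε]
            ring
    have hRmeas : Continuous R := by
      apply Continuous.mul _ continuous_id
      apply Continuous.sub
      apply Continuous.sub
      · exact hgc.comp (continuous_const.add (continuous_const.mul continuous_id))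
      · exact continuous_const
      · exact continuous_const.mul (continuous_const.mul continuous_id)
    have hRint : Integrable R γ := by
      apply Integrable.mono' (oht_i3.const_mul (M * σ^2))
        hRmeas.aestronglyMeasurable
      exact ae_of_all _ hRbd
    have hdecomp : (fun ε : ℝ => g (μ + σ * ε) * ε)
        = fun ε : ℝ => (g μ * ε + (σ * d) * ε^2) + R ε := by
      funext ε; rw [hR]; ring
    have hint_lin : Integrable (fun ε : ℝ => g μ * ε + (σ * d) * ε^2) γ :=
      (oht_i1.const_mul (g μ)).add (oht_i2.const_mul (σ * d))
    have hI : ∫ ε : ℝ, g (μ + σ * ε) * ε ∂γ = σ * d + ∫ ε : ℝ, R ε ∂γ := by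
      rw [hdecomp, integral_add hint_lin hRint,
        integral_add (oht_i1.const_mul (g μ)) (oht_i2.const_mul (σ * d)),
        integral_const_mul, integral_const_mul, oht_m1, oht_m2]
      ring
    have hRest : ‖∫ ε : ℝ, R ε ∂γ‖ ≤ (M * σ^2) * C := by
      have := norm_integral_le_of_norm_le (μ := γ)
        ((oht_i3.const_mul (M * σ^2))) (ae_of_all _ hRbd)
      rwa [integral_const_mul] at this
    rw [hI]
    have : (1 / σ) * (σ * d + ∫ ε : ℝ, R ε ∂γ) - d = (1 / σ) * ∫ ε : ℝ, R ε ∂γ := by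
      field_simp
      ring
    rw [this, norm_mul]
    have h1σ : ‖(1:ℝ) / σ‖ = 1 / σ := by
      rw [Real.norm_eq_abs, abs_of_pos (by positivity)]
    rw [h1σ]
    calc (1 / σ) * ‖∫ ε : ℝ, R ε ∂γ‖ ≤ (1 / σ) * ((M * σ^2) * C) := by
          apply mul_le_mul_of_nonneg_left hRest (by positivity)
      _ = M * C * σ := by field_simp
  -- squeeze
  rw [tendsto_iff_norm_sub_tendsto_zero]
  have htends : Tendsto (fun σ : ℝ => M * C * σ) (nhdsWithin 0 (Set.Ioi 0)) (nhds 0) := by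
    have : Tendsto (fun σ : ℝ => M * C * σ) (nhds 0) (nhds (M * C * 0)) :=
      (continuous_const.mul continuous_id).tendsto 0
    rw [mul_zero] at this
    exact this.mono_left nhdsWithin_le_nhds
  refine tendsto_of_tendsto_of_tendsto_of_le_of_le' tendsto_const_nhds htends ?_ ?_
  · exact Eventually.of_forall fun σ => norm_nonneg _
  · filter_upwards [self_mem_nhdsWithin] with σ hσ
    exact key σ hσ
end

section
/- Let ψ ∈ ℝⁿ be fixed, let f : ℝ → ℝⁿ be continuously differentiable, and let L : ℝⁿ × ℝ → ℝ be a meta-objective depending both on the agent parameter and explicitly on the hyper-parameter. Assume the composite map g : ℝ → ℝ, g(η) = L(ψ + f(η), η), is twice differentiable with globally bounded second derivative, and that L is continuously differentiable in both arguments. Then lim_{σ → 0⁺} (1/σ) ∫_ℝ g(μ + σ·ε) · ε dγ(ε) = ⟪∇_ψ L(ψ + f(μ), μ), f′(μ)⟫ + ∂_η L(ψ + f(μ), μ), where γ is the standard Gaussian measure on ℝ and ⟪·,·⟫ is the Euclidean inner product on ℝⁿ. (General form of Proposition 1 before imposing that the meta-objective does not explicitly depend on the meta-parameter.) -/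
open MeasureTheory ProbabilityTheory Filter Real
open scoped RealInnerProductSpace

open Set
open scoped ENNReal NNReal

noncomputable def gpdf (x : ℝ) : ℝ := gaussianPDFReal 0 1 x

lemma gpdf_nonneg (x : ℝ) : 0 ≤ gpdf x := gaussianPDFReal_nonneg 0 1 x

lemma gpdf_eq (x : ℝ) : gpdf x = (√(2 * π))⁻¹ * rexp (-(1/2) * x ^ 2) := by
  simp only [gpdf, gaussianPDFReal, NNReal.coe_one, mul_one, sub_zero]
  congr 1
  ring

lemma gauss_int (h : ℝ → ℝ) :
    ∫ x, h x ∂(gaussianReal 0 1) = ∫ x, gpdf x * h x := by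
  have h1 : gaussianReal 0 1 = volume.withDensity (gaussianPDF 0 1) :=
    gaussianReal_of_var_ne_zero _ one_ne_zero
  have h2 : gaussianPDF 0 1 = fun x => ((gpdf x).toNNReal : ℝ≥0∞) := rfl
  rw [h1, h2]
  rw [integral_withDensity_eq_integral_smul (f := fun y => (gpdf y).toNNReal)
    ((measurable_gaussianPDFReal 0 1).real_toNNReal) h]
  congr 1; funext x
  simp [NNReal.smul_def, Real.coe_toNNReal _ (gpdf_nonneg x)]

lemma integrable_abs_rpow_mul_exp {b : ℝ} (hb : 0 < b) {s : ℝ} (hs : -1 < s) :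
    Integrable (fun x : ℝ => |x| ^ s * rexp (-b * x ^ 2)) := by
  rw [← integrableOn_univ, ← @Iio_union_Ici _ _ (0 : ℝ), integrableOn_union,
    integrableOn_Ici_iff_integrableOn_Ioi]
  have h0 : IntegrableOn (fun x : ℝ => |x| ^ s * rexp (-b * x ^ 2)) (Ioi 0) :=
    (integrableOn_rpow_mul_exp_neg_mul_sq hb hs).congr_fun
      (fun x hx => by rw [abs_of_pos hx]) measurableSet_Ioi
  refine ⟨?_, h0⟩
  rw [← (Measure.measurePreserving_neg (volume : Measure ℝ)).integrableOn_comp_preimage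
      (Homeomorph.neg ℝ).measurableEmbedding]
  simp only [Function.comp_def, abs_neg, neg_sq, neg_preimage, neg_Iio, neg_zero]
  exact h0

lemma gauss_integrable_abs_pow (k : ℕ) :
    Integrable (fun x => gpdf x * |x| ^ k) := by
  have h := (integrable_abs_rpow_mul_exp (b := 1/2) (by norm_num) (s := (k : ℝ))
    (lt_of_lt_of_le (by norm_num) (Nat.cast_nonneg k))).const_mul ((√(2 * π))⁻¹)
  refine h.congr (Filter.Eventually.of_forall fun x => ?_)
  simp only []
  rw [gpdf_eq, Real.rpow_natCast]
  ring

lemma gauss_first_moment : ∫ x, x ∂(gaussianReal 0 1) = 0 := by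
  rw [gauss_int]
  have h1 := integral_neg_eq_self (fun y : ℝ => gpdf y * y) volume
  have h2 : ∀ x : ℝ, gpdf (-x) * (-x) = -(gpdf x * x) := by
    intro x
    rw [gpdf_eq, gpdf_eq]
    ring_nf
  simp only [h2, integral_neg] at h1
  linarith

lemma exp_half_eq (x : ℝ) : rexp (-x ^ 2 / 2) = rexp (-(1/2) * x ^ 2) := by
  congr 1; ring

lemma integrable_exp_half : Integrable (fun x : ℝ => rexp (-(1/2) * x ^ 2)) :=
  integrable_exp_neg_mul_sq (by norm_num)

lemma integrable_sq_exp_half : Integrable (fun x : ℝ => x ^ 2 * rexp (-(1/2) * x ^ 2)) := by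
  have h := integrable_abs_rpow_mul_exp (b := 1/2) (by norm_num) (s := (2 : ℝ)) (by norm_num)
  refine h.congr (Filter.Eventually.of_forall fun x => ?_)
  have hx : |x| ^ (2:ℝ) = x ^ 2 := by
    rw [show (2:ℝ) = ((2:ℕ):ℝ) by norm_num, Real.rpow_natCast, sq_abs]
  simp only [hx]

lemma gauss_Ioi_parts :
    ∫ x in Ioi (0:ℝ), (x ^ 2 - 1) * rexp (-(1/2) * x ^ 2) = 0 := by
  have hderiv : ∀ x ∈ Ici (0:ℝ), HasDerivAt (fun y : ℝ => -y * rexp (-(1/2) * y ^ 2))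
      ((x ^ 2 - 1) * rexp (-(1/2) * x ^ 2)) x := by
    intro x _
    have h1 := (hasDerivAt_pow 2 x).const_mul (-(1/2) : ℝ)
    have h3 := ((hasDerivAt_id x).neg.mul h1.exp)
    refine h3.congr_deriv ?_
    simp only [Pi.neg_apply, id_eq]
    push_cast
    ring
  have hint : IntegrableOn (fun x : ℝ => (x ^ 2 - 1) * rexp (-(1/2) * x ^ 2)) (Ioi 0) := by
    have := (integrable_sq_exp_half.sub integrable_exp_half).integrableOn (s := Ioi 0)
    refine this.congr_fun (fun x _ => by simp only [Pi.sub_apply]; ring) measurableSet_Ioi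
  have htend : Tendsto (fun y : ℝ => -y * rexp (-(1/2) * y ^ 2)) atTop (nhds 0) := by
    have h := (tendsto_rpow_abs_mul_exp_neg_mul_sq_cocompact (a := 1/2) (by norm_num) 1).mono_left
      _root_.atTop_le_cocompact
    rw [tendsto_zero_iff_norm_tendsto_zero]
    refine squeeze_zero (fun y => norm_nonneg _) (fun y => ?_) h
    rw [Real.norm_eq_abs, abs_mul, abs_neg, Real.rpow_one, abs_of_pos (Real.exp_pos _)]
  have := integral_Ioi_of_hasDerivAt_of_tendsto' hderiv hint htend
  rw [this]
  norm_num

lemma sqrt_two_pi_pos : (0:ℝ) < √(2 * π) := Real.sqrt_pos.mpr (by positivity)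

lemma integral_exp_half : ∫ x : ℝ, rexp (-(1/2) * x ^ 2) = √(2 * π) := by
  rw [integral_gaussian (1/2), show (π/(1/2)) = 2*π by ring]

lemma gauss_second_moment : ∫ x, x ^ 2 ∂(gaussianReal 0 1) = 1 := by
  rw [gauss_int]
  have key : ∫ x : ℝ, x ^ 2 * rexp (-(1/2) * x ^ 2) = √(2 * π) := by
    have h1 : ∫ x : ℝ, x ^ 2 * rexp (-(1/2) * x ^ 2)
        = 2 * ∫ x in Ioi (0:ℝ), x ^ 2 * rexp (-(1/2) * x ^ 2) := by
      rw [← integral_comp_abs (f := fun y => y ^ 2 * rexp (-(1/2) * y ^ 2))]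
      congr 1; funext x; rw [sq_abs]
    have h2 : ∫ x : ℝ, rexp (-(1/2) * x ^ 2)
        = 2 * ∫ x in Ioi (0:ℝ), rexp (-(1/2) * x ^ 2) := by
      rw [← integral_comp_abs (f := fun y => rexp (-(1/2) * y ^ 2))]
      congr 1; funext x; rw [sq_abs]
    have h3 : (∫ x in Ioi (0:ℝ), x ^ 2 * rexp (-(1/2) * x ^ 2))
        - ∫ x in Ioi (0:ℝ), rexp (-(1/2) * x ^ 2) = 0 := by
      rw [← integral_sub (integrable_sq_exp_half.integrableOn)
        (integrable_exp_half.integrableOn)]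
      rw [show (∫ x in Ioi (0:ℝ), (x ^ 2 * rexp (-(1/2) * x ^ 2) - rexp (-(1/2) * x ^ 2)))
          = ∫ x in Ioi (0:ℝ), (x ^ 2 - 1) * rexp (-(1/2) * x ^ 2) from by
        congr 1; funext x; ring]
      exact gauss_Ioi_parts
    rw [h1, ← integral_exp_half, h2]
    linarith
  have : ∫ x : ℝ, gpdf x * x ^ 2 = (√(2 * π))⁻¹ * ∫ x : ℝ, x ^ 2 * rexp (-(1/2) * x ^ 2) := by
    rw [← integral_const_mul]
    congr 1; funext x; rw [gpdf_eq]; ring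
  rw [this, key, inv_mul_cancel₀ (ne_of_gt sqrt_two_pi_pos)]

lemma gauss_integrable_iff (h : ℝ → ℝ) :
    Integrable h (gaussianReal 0 1) ↔ Integrable (fun x => gpdf x * h x) volume := by
  rw [gaussianReal_of_var_ne_zero _ one_ne_zero,
    show gaussianPDF 0 1 = fun x => (((gpdf x).toNNReal : ℝ≥0) : ℝ≥0∞) from rfl,
    integrable_withDensity_iff_integrable_smul (f := fun y => (gpdf y).toNNReal)
      ((measurable_gaussianPDFReal 0 1).real_toNNReal)]
  constructor <;> intro hh <;> refine hh.congr (Filter.Eventually.of_forall fun x => ?_) <;>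
    simp [NNReal.smul_def, Real.coe_toNNReal _ (gpdf_nonneg x)]

lemma gauss_integrable_poly (a b c d : ℝ) :
    Integrable (fun x => a + b * |x| + c * x ^ 2 + d * |x| ^ 3) (gaussianReal 0 1) := by
  rw [gauss_integrable_iff]
  have h0 := (gauss_integrable_abs_pow 0).const_mul a
  have h1 := (gauss_integrable_abs_pow 1).const_mul b
  have h2 := (gauss_integrable_abs_pow 2).const_mul c
  have h3 := (gauss_integrable_abs_pow 3).const_mul d
  refine (((h0.add h1).add h2).add h3).congr (Filter.Eventually.of_forall fun x => ?_)
  simp only [Pi.add_apply]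
  rw [sq_abs]
  ring

lemma taylor_bound {g : ℝ → ℝ} (hg1 : ∀ x : ℝ, DifferentiableAt ℝ g x)
    (hg2 : ∀ x : ℝ, DifferentiableAt ℝ (deriv g) x) {M : ℝ}
    (hM : ∀ x : ℝ, |deriv (deriv g) x| ≤ M) (x y : ℝ) :
    |g y - g x - deriv g x * (y - x)| ≤ M * (y - x) ^ 2 := by
  have hLip : ∀ t : ℝ, |deriv g t - deriv g x| ≤ M * |t - x| := by
    intro t
    have := Convex.norm_image_sub_le_of_norm_deriv_le (s := Set.univ) (f := deriv g)
      (fun z _ => hg2 z) (fun z _ => hM z) convex_univ (Set.mem_univ x) (Set.mem_univ t)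
    simpa [Real.norm_eq_abs] using this
  set u : ℝ → ℝ := fun t => g t - deriv g x * t with hu_def
  have hu : ∀ t : ℝ, DifferentiableAt ℝ u t := fun t =>
    (hg1 t).sub ((differentiableAt_id.const_mul _))
  have hu' : ∀ t : ℝ, deriv u t = deriv g t - deriv g x := by
    intro t
    have h1 : DifferentiableAt ℝ (fun y : ℝ => deriv g x * y) t := differentiableAt_fun_id.const_mul _
    rw [hu_def]
    rw [deriv_fun_sub (hg1 t) h1, deriv_const_mul _ differentiableAt_fun_id, deriv_id'']
    ring
  have key := Convex.norm_image_sub_le_of_norm_deriv_le (s := Set.uIcc x y) (f := u)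
    (C := M * |y - x|) (fun z _ => hu z)
    (fun z hz => by
      rw [Real.norm_eq_abs, hu' z]
      exact le_trans (hLip z) (mul_le_mul_of_nonneg_left (abs_sub_left_of_mem_uIcc hz)
        (le_trans (abs_nonneg _) (hM x))))
    (convex_uIcc x y) Set.left_mem_uIcc Set.right_mem_uIcc
  have h2 : u y - u x = g y - g x - deriv g x * (y - x) := by rw [hu_def]; ring
  rw [Real.norm_eq_abs, Real.norm_eq_abs, h2] at key
  calc |g y - g x - deriv g x * (y - x)| ≤ M * |y - x| * |y - x| := key
    _ = M * (y - x) ^ 2 := by rw [mul_assoc, ← abs_mul, ← sq, abs_sq]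

lemma deriv_g_eq (n : ℕ) (ψ : EuclideanSpace ℝ (Fin n)) (f : ℝ → EuclideanSpace ℝ (Fin n))
    (L : EuclideanSpace ℝ (Fin n) → ℝ → ℝ) (μ : ℝ)
    (hf : ContDiff ℝ 1 f)
    (hL : ContDiff ℝ 1 (fun p : EuclideanSpace ℝ (Fin n) × ℝ => L p.1 p.2))
    (g : ℝ → ℝ) (hg : g = fun η => L (ψ + f η) η) :
    deriv g μ = ⟪gradient (fun x => L x μ) (ψ + f μ), deriv f μ⟫
      + deriv (fun η => L (ψ + f μ) η) μ := by
  have hF : Differentiable ℝ (fun p : EuclideanSpace ℝ (Fin n) × ℝ => L p.1 p.2) :=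
    hL.differentiable one_ne_zero
  set φ := fderiv ℝ (fun p : EuclideanSpace ℝ (Fin n) × ℝ => L p.1 p.2) (ψ + f μ, μ) with hφ
  have hcurve : HasDerivAt (fun η : ℝ => ((ψ + f η : EuclideanSpace ℝ (Fin n)), η))
      ((deriv f μ, 1) : EuclideanSpace ℝ (Fin n) × ℝ) μ := by
    simpa using
      (((hf.differentiable one_ne_zero μ).hasDerivAt).const_add ψ).prodMk (hasDerivAt_id μ)
  have hgd : HasDerivAt g (φ ((deriv f μ, 1) : EuclideanSpace ℝ (Fin n) × ℝ)) μ := by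
    rw [hg]
    have h2 := HasFDerivAt.comp_hasDerivAt μ ((hF _).hasFDerivAt) hcurve
    simpa [Function.comp_def] using h2
  have hsplit : φ ((deriv f μ, 1) : EuclideanSpace ℝ (Fin n) × ℝ)
      = φ ((deriv f μ, 0) : EuclideanSpace ℝ (Fin n) × ℝ)
        + φ ((0, 1) : EuclideanSpace ℝ (Fin n) × ℝ) := by
    rw [← φ.map_add]
    norm_num
  have hpart1 : HasFDerivAt (fun x : EuclideanSpace ℝ (Fin n) => L x μ)
      (φ.comp (ContinuousLinearMap.inl ℝ (EuclideanSpace ℝ (Fin n)) ℝ)) (ψ + f μ) := by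
    have h1 : HasFDerivAt (fun x : EuclideanSpace ℝ (Fin n) => ((x, μ)))
        (ContinuousLinearMap.inl ℝ (EuclideanSpace ℝ (Fin n)) ℝ) (ψ + f μ) :=
      hasFDerivAt_prodMk_left (ψ + f μ) μ
    exact (hF ((ψ + f μ, μ))).hasFDerivAt.comp (ψ + f μ) h1
  have hgrad : ⟪gradient (fun x : EuclideanSpace ℝ (Fin n) => L x μ) (ψ + f μ), deriv f μ⟫
      = φ ((deriv f μ, 0) : EuclideanSpace ℝ (Fin n) × ℝ) := by
    rw [gradient, hpart1.fderiv]
    rw [InnerProductSpace.toDual_symm_apply]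
    rfl
  have hpart2 : HasDerivAt (fun t : ℝ => L (ψ + f μ) t)
      (φ ((0, 1) : EuclideanSpace ℝ (Fin n) × ℝ)) μ := by
    have h1 : HasDerivAt (fun t : ℝ => (((ψ + f μ : EuclideanSpace ℝ (Fin n)), t)))
        (((0 : EuclideanSpace ℝ (Fin n)), (1 : ℝ))) μ :=
      (hasDerivAt_const μ _).prodMk (hasDerivAt_id μ)
    exact (hF ((ψ + f μ, μ))).hasFDerivAt.comp_hasDerivAt μ h1
  rw [hgd.deriv, hsplit, hgrad, hpart2.deriv]

lemma gauss_integrable_of_le (h : ℝ → ℝ) (hc : Continuous h) (a b c d : ℝ)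
    (hbd : ∀ x : ℝ, |h x| ≤ a + b * |x| + c * x ^ 2 + d * |x| ^ 3) :
    Integrable h (gaussianReal 0 1) :=
  (gauss_integrable_poly a b c d).mono' hc.aestronglyMeasurable
    (Filter.Eventually.of_forall fun x => by simpa [Real.norm_eq_abs] using hbd x)

/-- General form of Proposition 1 (before imposing that the meta-objective has no
explicit dependence on the meta-parameter): for fixed `ψ ∈ ℝⁿ`, continuously
differentiable `f : ℝ → ℝⁿ` and meta-objective `L : ℝⁿ × ℝ → ℝ` continuously
differentiable in both arguments, if the composite `g(η) = L(ψ + f(η), η)` is twice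
differentiable with globally bounded second derivative, then
`lim_{σ→0⁺} (1/σ) ∫ g(μ + σε) ε dγ(ε) = ⟪∇_ψ L(ψ + f(μ), μ), f′(μ)⟫ + ∂_η L(ψ + f(μ), μ)`,
where `γ` is the standard Gaussian measure on `ℝ`. -/
theorem oht_es_meta_gradient_limit_general (n : ℕ)
    (ψ : EuclideanSpace ℝ (Fin n)) (f : ℝ → EuclideanSpace ℝ (Fin n))
    (L : EuclideanSpace ℝ (Fin n) → ℝ → ℝ) (μ : ℝ)
    (hf : ContDiff ℝ 1 f)
    (hL : ContDiff ℝ 1 (fun p : EuclideanSpace ℝ (Fin n) × ℝ => L p.1 p.2))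
    (g : ℝ → ℝ) (hg : g = fun η => L (ψ + f η) η)
    (hg1 : ∀ x : ℝ, DifferentiableAt ℝ g x)
    (hg2 : ∀ x : ℝ, DifferentiableAt ℝ (deriv g) x)
    (M : ℝ) (hM : ∀ x : ℝ, |deriv (deriv g) x| ≤ M) :
    Filter.Tendsto
      (fun σ : ℝ => (1 / σ) * ∫ ε : ℝ, g (μ + σ * ε) * ε ∂(gaussianReal 0 1))
      (nhdsWithin 0 (Set.Ioi 0))
      (nhds (⟪gradient (fun x => L x μ) (ψ + f μ), deriv f μ⟫
              + deriv (fun η => L (ψ + f μ) η) μ)) := by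
  rw [← deriv_g_eq n ψ f L μ hf hL g hg]
  set D := deriv g μ with hD
  set γ := gaussianReal 0 1 with hγ
  have hM0 : 0 ≤ M := le_trans (abs_nonneg _) (hM 0)
  have hgc : Continuous g := by
    rw [continuous_iff_continuousAt]; exact fun x => (hg1 x).continuousAt
  -- remainder
  set r : ℝ → ℝ → ℝ := fun σ ε => g (μ + σ * ε) - g μ - D * (σ * ε) with hr
  have hrbd : ∀ σ ε : ℝ, |r σ ε| ≤ M * σ ^ 2 * ε ^ 2 := by
    intro σ ε
    have := taylor_bound hg1 hg2 hM μ (μ + σ * ε)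
    simp only [add_sub_cancel_left] at this
    calc |r σ ε| ≤ M * (σ * ε) ^ 2 := this
      _ = M * σ ^ 2 * ε ^ 2 := by ring
  -- integrability
  have int_eps : Integrable (fun ε : ℝ => ε) γ :=
    gauss_integrable_of_le _ continuous_id 0 1 0 0
      (fun x => by simp)
  have int_sq : Integrable (fun ε : ℝ => ε ^ 2) γ :=
    gauss_integrable_of_le _ (continuous_pow 2) 0 0 1 0
      (fun x => by simp [abs_nonneg, sq_abs, abs_pow])
  have int_cube : Integrable (fun ε : ℝ => |ε| ^ 3) γ :=
    gauss_integrable_of_le _ (continuous_abs.pow 3) 0 0 0 1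
      (fun x => by simp [abs_pow, abs_abs])
  have int_r : ∀ σ : ℝ, Integrable (fun ε => r σ ε * ε) γ := by
    intro σ
    refine gauss_integrable_of_le _ ?_ 0 0 0 (M * σ ^ 2) (fun x => ?_)
    · exact ((hgc.comp (continuous_const.add (continuous_const.mul continuous_id))).sub
        continuous_const |>.sub (continuous_const.mul
          (continuous_const.mul continuous_id))).mul continuous_id
    · have h1 : |r σ x * x| ≤ (M * σ ^ 2 * x ^ 2) * |x| := by
        rw [abs_mul]
        exact mul_le_mul_of_nonneg_right (hrbd σ x) (abs_nonneg x)
      calc |r σ x * x| ≤ (M * σ ^ 2 * x ^ 2) * |x| := h1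
        _ = 0 + 0 * |x| + 0 * x ^ 2 + M * σ ^ 2 * |x| ^ 3 := by
            rw [← sq_abs x]; ring
  -- C3
  set C3 := ∫ ε : ℝ, |ε| ^ 3 ∂γ with hC3
  have hC3nn : 0 ≤ C3 := integral_nonneg (fun x => by positivity)
  -- decomposition of the integral
  have hIdecomp : ∀ σ : ℝ,
      ∫ ε : ℝ, g (μ + σ * ε) * ε ∂γ = D * σ + ∫ ε : ℝ, r σ ε * ε ∂γ := by
    intro σ
    have heq : (fun ε : ℝ => g (μ + σ * ε) * ε)
        = fun ε => (g μ * ε + (D * σ) * ε ^ 2) + r σ ε * ε := by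
      funext ε; rw [hr]; ring
    have e1 : ∫ ε : ℝ, ((g μ * ε + (D * σ) * ε ^ 2) + r σ ε * ε) ∂γ
        = (∫ ε : ℝ, (g μ * ε + (D * σ) * ε ^ 2) ∂γ) + ∫ ε : ℝ, r σ ε * ε ∂γ :=
      integral_add ((int_eps.const_mul (g μ)).add (int_sq.const_mul (D * σ))) (int_r σ)
    have e2 : ∫ ε : ℝ, (g μ * ε + (D * σ) * ε ^ 2) ∂γ
        = (∫ ε : ℝ, g μ * ε ∂γ) + ∫ ε : ℝ, (D * σ) * ε ^ 2 ∂γ :=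
      integral_add (int_eps.const_mul (g μ)) (int_sq.const_mul (D * σ))
    have e3 : ∫ ε : ℝ, g μ * ε ∂γ = g μ * ∫ ε : ℝ, ε ∂γ := integral_const_mul _ _
    have e4 : ∫ ε : ℝ, (D * σ) * ε ^ 2 ∂γ = (D * σ) * ∫ ε : ℝ, ε ^ 2 ∂γ := integral_const_mul _ _
    rw [heq, e1, e2, e3, e4, show ∫ ε : ℝ, ε ∂γ = 0 from gauss_first_moment,
      show ∫ ε : ℝ, ε ^ 2 ∂γ = 1 from gauss_second_moment]
    ring
  -- bound on remainder integral
  have hrint_bd : ∀ σ : ℝ, |∫ ε : ℝ, r σ ε * ε ∂γ| ≤ M * σ ^ 2 * C3 := by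
    intro σ
    have h1 : ∀ ε : ℝ, ‖r σ ε * ε‖ ≤ M * σ ^ 2 * |ε| ^ 3 := by
      intro ε
      rw [Real.norm_eq_abs, abs_mul]
      calc |r σ ε| * |ε| ≤ (M * σ ^ 2 * ε ^ 2) * |ε| :=
            mul_le_mul_of_nonneg_right (hrbd σ ε) (abs_nonneg ε)
        _ = M * σ ^ 2 * |ε| ^ 3 := by rw [← sq_abs ε]; ring
    have h2 := norm_integral_le_of_norm_le (int_cube.const_mul (M * σ ^ 2))
      (Filter.Eventually.of_forall h1)
    rw [Real.norm_eq_abs, integral_const_mul] at h2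
    exact h2
  -- squeeze
  have key : ∀ σ ∈ Set.Ioi (0:ℝ),
      |(1 / σ) * ∫ ε : ℝ, g (μ + σ * ε) * ε ∂γ - D| ≤ M * C3 * σ := by
    intro σ hσ
    have hσ0 : (0:ℝ) < σ := hσ
    rw [hIdecomp σ]
    have : (1 / σ) * (D * σ + ∫ ε : ℝ, r σ ε * ε ∂γ) - D
        = (1 / σ) * ∫ ε : ℝ, r σ ε * ε ∂γ := by
      field_simp
      ring
    rw [this, abs_mul, abs_of_pos (by positivity : (0:ℝ) < 1/σ)]
    calc (1/σ) * |∫ ε : ℝ, r σ ε * ε ∂γ| ≤ (1/σ) * (M * σ ^ 2 * C3) :=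
          mul_le_mul_of_nonneg_left (hrint_bd σ) (by positivity)
      _ = M * C3 * σ := by field_simp
  have hzero : Tendsto (fun σ : ℝ => (1 / σ) * (∫ ε : ℝ, g (μ + σ * ε) * ε ∂γ) - D)
      (nhdsWithin 0 (Set.Ioi 0)) (nhds 0) := by
    apply squeeze_zero_norm' (a := fun σ : ℝ => M * C3 * σ)
    · filter_upwards [self_mem_nhdsWithin] with σ hσ
      simpa [Real.norm_eq_abs] using key σ hσ
    · have : Tendsto (fun σ : ℝ => M * C3 * σ) (nhds 0) (nhds (M * C3 * 0)) :=
        (continuous_const.mul continuous_id).tendsto 0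
      simpa using this.mono_left nhdsWithin_le_nhds
  have := hzero.add (tendsto_const_nhds (x := D))
  simpa using this
end

section
/- Let g : ℝ → ℝ be twice differentiable with globally bounded second derivative, and let μ ∈ ℝ. Then lim_{σ → 0⁺} (1/σ) ∫_ℝ g(μ + σ·ε) · ε dγ(ε) = g′(μ), where γ is the standard Gaussian measure on ℝ. (Core analytic step in the proof of Proposition 1: after Taylor-expanding g(μ + σε) = g(μ) + σε g′(μ) + O(σ²ε²), the zeroth-order term vanishes because E[ε] = 0 and the second-order term vanishes in the limit σ → 0.) -/
open MeasureTheory ProbabilityTheory Filter Real Set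
open scoped ENNReal NNReal

noncomputable def esP : ℝ → ℝ := ProbabilityTheory.gaussianPDFReal 0 1

lemma esP_apply (x : ℝ) : esP x = (√(2 * π))⁻¹ * rexp (-(1/2) * x ^ 2) := by
  simp only [esP, gaussianPDFReal, NNReal.coe_one, mul_one, sub_zero]
  ring_nf

lemma esP_nonneg (x : ℝ) : 0 ≤ esP x := gaussianPDFReal_nonneg 0 1 x

lemma esP_neg (x : ℝ) : esP (-x) = esP x := by
  rw [esP_apply, esP_apply, neg_sq]

lemma es_gauss_integral (f : ℝ → ℝ) :
    ∫ x, f x ∂(gaussianReal 0 1) = ∫ x, f x * esP x := by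
  rw [gaussianReal_of_var_ne_zero 0 one_ne_zero]
  have h : (volume.withDensity (gaussianPDF 0 1))
      = volume.withDensity (fun x => ((Real.toNNReal (esP x) : ℝ≥0) : ℝ≥0∞)) := rfl
  have hmeas : Measurable (fun x => Real.toNNReal (esP x)) :=
    (measurable_gaussianPDFReal 0 1).real_toNNReal
  rw [h, integral_withDensity_eq_integral_smul hmeas f]
  congr 1
  funext x
  rw [NNReal.smul_def, Real.coe_toNNReal _ (esP_nonneg x)]
  exact mul_comm _ _

lemma es_moment_integrable (n : ℕ) : Integrable (fun x : ℝ => x ^ n * esP x) := by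
  have h : Integrable (fun x : ℝ => x ^ (n : ℝ) * rexp (-(1/2) * x ^ 2)) :=
    integrable_rpow_mul_exp_neg_mul_sq (by norm_num)
      (lt_of_lt_of_le neg_one_lt_zero (Nat.cast_nonneg n))
  refine (h.const_mul (√(2 * π))⁻¹).congr (Eventually.of_forall fun x => ?_)
  show (√(2 * π))⁻¹ * (x ^ (n : ℝ) * rexp (-(1/2) * x ^ 2)) = x ^ n * esP x
  rw [esP_apply, ← Real.rpow_natCast x n]
  ring

lemma es_m1 : ∫ x : ℝ, x * esP x = 0 := by
  have h : ∫ x : ℝ, -(x * esP x) = ∫ x : ℝ, x * esP x := by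
    simpa [esP_neg, neg_mul] using
      MeasureTheory.integral_neg_eq_self (fun x : ℝ => x * esP x) volume
  rw [integral_neg] at h
  linarith

lemma es_rpow_two (x : ℝ) : x ^ (2 : ℝ) = x ^ (2 : ℕ) := by
  rw [show (2 : ℝ) = ((2 : ℕ) : ℝ) by norm_num, Real.rpow_natCast]

lemma es_m2 : ∫ x : ℝ, x ^ 2 * esP x = 1 := by
  have habs : (∫ x : ℝ, x ^ 2 * esP x) = ∫ x : ℝ, |x| ^ 2 * esP |x| := by
    congr 1
    funext x
    rw [sq_abs, show esP |x| = esP x from by rw [esP_apply, esP_apply, sq_abs]]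
  rw [habs, integral_comp_abs (f := fun x => x ^ 2 * esP x)]
  have hs : ∫ x in Ioi (0:ℝ), x ^ 2 * esP x
      = (√(2*π))⁻¹ * ∫ x in Ioi (0:ℝ), x ^ (2:ℝ) * rexp (-(1/2) * x ^ (2:ℝ)) := by
    rw [← integral_const_mul]
    refine setIntegral_congr_fun measurableSet_Ioi fun x _ => ?_
    rw [esP_apply, es_rpow_two]
    ring
  have key := integral_rpow_mul_exp_neg_mul_rpow (p := 2) (q := 2) (b := 1/2)
    (by norm_num) (by norm_num) (by norm_num)
  have hG : Real.Gamma (((2:ℝ) + 1) / 2) = √π / 2 := by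
    rw [show ((2:ℝ) + 1) / 2 = 1/2 + 1 by norm_num, Real.Gamma_add_one (by norm_num),
      Real.Gamma_one_half_eq]
    ring
  have hb : ((1:ℝ)/2) ^ (-((2:ℝ) + 1) / 2) = 2 * √2 := by
    rw [show (-((2:ℝ) + 1) / 2) = -(3/2) by norm_num, Real.rpow_neg (by norm_num), one_div,
      Real.inv_rpow (by norm_num), inv_inv, show (3/2 : ℝ) = 1 + 1/2 by norm_num,
      Real.rpow_add (by norm_num), Real.rpow_one, ← Real.sqrt_eq_rpow]
  rw [hs, key, hG, hb, Real.sqrt_mul (by norm_num : (0:ℝ) ≤ 2)]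
  have s2 : (0:ℝ) < √2 := Real.sqrt_pos.mpr (by norm_num)
  have sπ : (0:ℝ) < √π := Real.sqrt_pos.mpr Real.pi_pos
  field_simp

lemma es_taylor (g : ℝ → ℝ) (μ : ℝ)
    (hg : ∀ x : ℝ, DifferentiableAt ℝ g x)
    (hg' : ∀ x : ℝ, DifferentiableAt ℝ (deriv g) x)
    (M : ℝ) (hM : ∀ x : ℝ, |deriv (deriv g) x| ≤ M) (x : ℝ) :
    |g x - g μ - (x - μ) * deriv g μ| ≤ M * (x - μ) ^ 2 := by
  have hM0 : 0 ≤ M := le_trans (abs_nonneg _) (hM μ)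
  have hd : ∀ z : ℝ, |deriv g z - deriv g μ| ≤ M * |z - μ| := by
    intro z
    have := Convex.norm_image_sub_le_of_norm_deriv_le (f := deriv g) (s := Set.univ) (C := M)
      (fun y _ => hg' y) (fun y _ => by simpa [Real.norm_eq_abs] using hM y)
      convex_univ (Set.mem_univ μ) (Set.mem_univ z)
    simpa [Real.norm_eq_abs] using this
  set d := deriv g μ with hd_def
  set φ : ℝ → ℝ := fun y => g y - g μ - (y - μ) * d with hφ
  have hφd : ∀ y : ℝ, HasDerivAt φ (deriv g y - d) y := by
    intro y
    have h1 : HasDerivAt (fun y : ℝ => (y - μ) * d) d y := by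
      simpa using ((hasDerivAt_id y).sub_const μ).mul_const d
    exact ((hg y).hasDerivAt.sub_const (g μ)).sub h1
  have hbound : ∀ y ∈ segment ℝ μ x, ‖deriv g y - d‖ ≤ M * |x - μ| := by
    intro y hy
    rw [segment_eq_image'] at hy
    obtain ⟨t, ht, rfl⟩ := hy
    have h1 : |μ + t • (x - μ) - μ| ≤ |x - μ| := by
      simp only [add_sub_cancel_left, smul_eq_mul, abs_mul]
      calc |t| * |x - μ| ≤ 1 * |x - μ| := by
            apply mul_le_mul_of_nonneg_right _ (abs_nonneg _)
            rw [abs_of_nonneg ht.1]; exact ht.2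
        _ = |x - μ| := one_mul _
    calc ‖deriv g (μ + t • (x - μ)) - d‖ = |deriv g (μ + t • (x - μ)) - d| := rfl
      _ ≤ M * |μ + t • (x - μ) - μ| := hd _
      _ ≤ M * |x - μ| := mul_le_mul_of_nonneg_left h1 hM0
  have key := Convex.norm_image_sub_le_of_norm_hasDerivWithin_le
    (f := φ) (f' := fun y => deriv g y - d) (s := segment ℝ μ x) (C := M * |x - μ|)
    (fun y _ => (hφd y).hasDerivWithinAt) hbound (convex_segment μ x)
    (left_mem_segment ℝ μ x) (right_mem_segment ℝ μ x)
  have hφμ : φ μ = 0 := by simp [hφ]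
  have h2 : |φ x| ≤ M * |x - μ| * |x - μ| := by
    simpa [hφμ, Real.norm_eq_abs] using key
  calc |φ x| ≤ M * |x - μ| * |x - μ| := h2
    _ = M * (x - μ) ^ 2 := by rw [mul_assoc, abs_mul_abs_self, ← pow_two]

/-- Core analytic step of Proposition 1: for `g : ℝ → ℝ` twice differentiable with
globally bounded second derivative, the expected single-sample ES gradient estimate
`(1/σ) ∫ g(μ + σε) ε dγ(ε)` converges to `g′(μ)` as `σ → 0⁺`, where `γ` is the
standard Gaussian measure on `ℝ`. -/
theorem es_gradient_limit (g : ℝ → ℝ) (μ : ℝ)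
    (hg : ∀ x : ℝ, DifferentiableAt ℝ g x)
    (hg' : ∀ x : ℝ, DifferentiableAt ℝ (deriv g) x)
    (M : ℝ) (hM : ∀ x : ℝ, |deriv (deriv g) x| ≤ M) :
    Filter.Tendsto
      (fun σ : ℝ => (1 / σ) * ∫ ε : ℝ, g (μ + σ * ε) * ε ∂(gaussianReal 0 1))
      (nhdsWithin 0 (Set.Ioi 0)) (nhds (deriv g μ)) := by
  have hM0 : 0 ≤ M := le_trans (abs_nonneg _) (hM μ)
  set d := deriv g μ with hd_def
  set r : ℝ → ℝ := fun y => g y - g μ - (y - μ) * d with hr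
  have hrb : ∀ y : ℝ, |r y| ≤ M * (y - μ) ^ 2 := fun y => es_taylor g μ hg hg' M hM y
  have hgc : Continuous g := continuous_iff_continuousAt.mpr fun x => (hg x).continuousAt
  have hrc : Continuous r :=
    (hgc.sub continuous_const).sub ((continuous_id.sub continuous_const).mul continuous_const)
  have h3abs : Integrable (fun x : ℝ => |x ^ 3 * esP x|) := (es_moment_integrable 3).abs
  set c : ℝ := ∫ x : ℝ, |x ^ 3 * esP x| with hc
  have hc0 : 0 ≤ c := integral_nonneg fun x => abs_nonneg _
  have h1' : Integrable (fun x : ℝ => x * esP x) := by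
    simpa using es_moment_integrable 1
  have h2' : Integrable (fun x : ℝ => x ^ 2 * esP x) := es_moment_integrable 2
  -- the key bound, for each σ > 0
  have key : ∀ σ : ℝ, σ ∈ Set.Ioi (0:ℝ) →
      ‖(1 / σ) * (∫ ε : ℝ, g (μ + σ * ε) * ε ∂(gaussianReal 0 1)) - d‖ ≤ M * c * σ := by
    intro σ hσ
    rw [Set.mem_Ioi] at hσ
    rw [es_gauss_integral]
    have habs3 : ∀ x : ℝ, |x ^ 3 * esP x| = |x| ^ 3 * esP x := by
      intro x
      rw [abs_mul, abs_pow, abs_of_nonneg (esP_nonneg x)]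
    have hptbound : ∀ x : ℝ, ‖r (μ + σ * x) * x * esP x‖ ≤ M * σ ^ 2 * |x ^ 3 * esP x| := by
      intro x
      have hb : |r (μ + σ * x)| ≤ M * (σ * x) ^ 2 := by
        have := hrb (μ + σ * x)
        simpa [add_sub_cancel_left] using this
      calc ‖r (μ + σ * x) * x * esP x‖ = |r (μ + σ * x)| * (|x| * esP x) := by
            rw [Real.norm_eq_abs, abs_mul, abs_mul, abs_of_nonneg (esP_nonneg x), mul_assoc]
        _ ≤ (M * (σ * x) ^ 2) * (|x| * esP x) := by
            exact mul_le_mul_of_nonneg_right hb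
              (mul_nonneg (abs_nonneg x) (esP_nonneg x))
        _ = M * σ ^ 2 * |x ^ 3 * esP x| := by
            rw [habs3, mul_pow, ← sq_abs x]
            ring
    have hrint : Integrable (fun x : ℝ => r (μ + σ * x) * x * esP x) := by
      refine Integrable.mono' (h3abs.const_mul (M * σ ^ 2)) ?_
        (Eventually.of_forall hptbound)
      exact (((hrc.comp (continuous_const.add (continuous_const.mul continuous_id))).mul
        continuous_id).aestronglyMeasurable.mul
        (measurable_gaussianPDFReal 0 1).aestronglyMeasurable)
    have hsplit : (fun x : ℝ => g (μ + σ * x) * x * esP x)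
        = fun x => g μ * (x * esP x) + (σ * d) * (x ^ 2 * esP x)
            + r (μ + σ * x) * x * esP x := by
      funext x
      simp only [hr]
      ring
    have hE : ‖∫ x : ℝ, r (μ + σ * x) * x * esP x‖ ≤ M * σ ^ 2 * c := by
      have := norm_integral_le_of_norm_le (h3abs.const_mul (M * σ ^ 2))
        (Eventually.of_forall hptbound)
      rwa [integral_const_mul] at this
    have hI12 : Integrable (fun x : ℝ => g μ * (x * esP x) + (σ * d) * (x ^ 2 * esP x)) :=
      (h1'.const_mul (g μ)).add (h2'.const_mul (σ * d))
    rw [hsplit, integral_add hI12 hrint,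
      integral_add (h1'.const_mul (g μ)) (h2'.const_mul (σ * d)),
      integral_const_mul, integral_const_mul, es_m1, es_m2]
    set E : ℝ := ∫ x : ℝ, r (μ + σ * x) * x * esP x with hE_def
    have heq : (1 / σ) * (g μ * 0 + σ * d * 1 + E) - d = E / σ := by
      field_simp
      ring
    rw [heq, Real.norm_eq_abs, abs_div, abs_of_pos hσ, div_le_iff₀ hσ]
    calc |E| ≤ M * σ ^ 2 * c := by rwa [Real.norm_eq_abs] at hE
      _ = M * c * σ * σ := by ring
  have htend : Tendsto (fun σ : ℝ => M * c * σ) (nhdsWithin 0 (Set.Ioi 0)) (nhds 0) := by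
    have hcont : Continuous (fun σ : ℝ => M * c * σ) := by continuity
    have h := hcont.tendsto 0
    have := h.mono_left (nhdsWithin_le_nhds (s := Set.Ioi (0:ℝ)))
    simpa using this
  rw [← tendsto_sub_nhds_zero_iff]
  exact squeeze_zero_norm' (eventually_nhdsWithin_of_forall key) htend
end

section
/- Let g : ℝ → ℝ be bounded and continuous and let σ > 0. Then the Gaussian-smoothed objective F_σ(μ) = ∫_ℝ g(x) dN(μ, σ²)(x) is differentiable in the location parameter μ at every μ ∈ ℝ, with derivative F_σ′(μ) = (1/σ²) ∫_ℝ g(x) · (x − μ) dN(μ, σ²)(x), where N(μ, σ²) is the Gaussian measure on ℝ with mean μ and variance σ². (This is the score-function/REINFORCE identity for the Gaussian location family: the ES gradient estimate is an unbiased estimate of the gradient of the smoothed objective, even for non-differentiable g.) -/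
open MeasureTheory ProbabilityTheory Real
open scoped NNReal ENNReal

lemma aux_integral_gaussianReal_eq (m : ℝ) (v : ℝ≥0) (hv : v ≠ 0) (f : ℝ → ℝ) :
    ∫ x, f x ∂(gaussianReal m v) = ∫ x, f x * gaussianPDFReal m v x := by
  rw [gaussianReal_of_var_ne_zero _ hv]
  have hd : gaussianPDF m v = fun x => ((Real.toNNReal (gaussianPDFReal m v x) : ℝ≥0) : ℝ≥0∞) := by
    funext x
    rfl
  rw [hd, integral_withDensity_eq_integral_smul
    ((measurable_gaussianPDFReal m v).real_toNNReal) f]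
  congr 1
  funext x
  rw [NNReal.smul_def, smul_eq_mul, Real.coe_toNNReal _ (gaussianPDFReal_nonneg m v x), mul_comm]

lemma aux_hasDerivAt_gaussianPDFReal (v : ℝ≥0) (hv : (v : ℝ) ≠ 0) (x m : ℝ) :
    HasDerivAt (fun m => gaussianPDFReal m v x)
      (gaussianPDFReal m v x * ((x - m) / v)) m := by
  have h0 : HasDerivAt (fun m : ℝ => x - m) (-1) m := (hasDerivAt_id m).const_sub x
  have h1 : HasDerivAt (fun m : ℝ => -(x - m)^2 / (2 * (v:ℝ))) ((x - m) / v) m := by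
    have h2 := ((h0.pow 2).neg).div_const (2 * (v:ℝ))
    refine h2.congr_deriv ?_
    field_simp
    ring
  have h3 := (h1.exp).const_mul (√(2 * π * (v:ℝ)))⁻¹
  simpa [gaussianPDFReal, mul_assoc] using h3


lemma aux_exp_bound (v : ℝ) (hv : 0 < v) (t u : ℝ) (h : (u - t) ^ 2 ≤ 1) :
    rexp (-u ^ 2 / (2 * v)) * |u| ≤
      rexp ((1 / v + 1) ^ 2 * v) * rexp (-t ^ 2 / (4 * v)) := by
  have hut : |u - t| ≤ 1 := (sq_le_one_iff_abs_le_one _).mp h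
  have hu_le : |u| ≤ |t| + 1 := by
    calc |u| = |t + (u - t)| := by ring_nf
    _ ≤ |t| + |u - t| := abs_add_le _ _
    _ ≤ |t| + 1 := by linarith
  have hu_exp : |u| ≤ rexp |t| := hu_le.trans (Real.add_one_le_exp |t|)
  have hu2 : t ^ 2 - 2 * |t| ≤ u ^ 2 := by
    have h1 : -(|t| * |u - t|) ≤ t * (u - t) := by
      rw [← abs_mul]; exact neg_abs_le _
    have h2 : |t| * |u - t| ≤ |t| * 1 :=
      mul_le_mul_of_nonneg_left hut (abs_nonneg t)
    nlinarith [sq_nonneg (u - t)]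
  calc rexp (-u ^ 2 / (2 * v)) * |u| ≤ rexp (-u ^ 2 / (2 * v)) * rexp |t| :=
        mul_le_mul_of_nonneg_left hu_exp (Real.exp_pos _).le
    _ = rexp (-u ^ 2 / (2 * v) + |t|) := (Real.exp_add _ _).symm
    _ ≤ rexp ((1 / v + 1) ^ 2 * v + -t ^ 2 / (4 * v)) := by
        apply Real.exp_le_exp.mpr
        have h4v : (0:ℝ) < 4 * v := by positivity
        rw [show -u ^ 2 / (2 * v) + |t| = (-u ^ 2 * 2 + |t| * (4 * v)) / (4 * v) by
              field_simp; ring,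
          show (1 / v + 1) ^ 2 * v + -t ^ 2 / (4 * v)
              = (4 * (1 + v) ^ 2 + -t ^ 2) / (4 * v) by field_simp,
          div_le_div_iff_of_pos_right h4v]
        nlinarith [hu2, sq_nonneg (|t| - 2 * (1 + v)), sq_abs t, abs_nonneg t]
    _ = _ := Real.exp_add _ _

/-- Score-function (REINFORCE) identity for the Gaussian location family: for bounded
continuous `g : ℝ → ℝ` and `σ > 0`, the smoothed objective `F_σ(μ) = ∫ g dN(μ,σ²)` is
differentiable in the mean `μ`, with derivative
`F_σ′(μ) = (1/σ²) ∫ g(x)(x − μ) dN(μ,σ²)(x)`. -/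
theorem gaussian_score_function_identity (g : ℝ → ℝ) (σ : ℝ) (hσ : 0 < σ)
    (hcont : Continuous g) (hbdd : ∃ C : ℝ, ∀ x : ℝ, |g x| ≤ C) (μ : ℝ) :
    HasDerivAt (fun m : ℝ => ∫ x : ℝ, g x ∂(gaussianReal m ⟨σ ^ 2, sq_nonneg σ⟩))
      ((1 / σ ^ 2) * ∫ x : ℝ, g x * (x - μ) ∂(gaussianReal μ ⟨σ ^ 2, sq_nonneg σ⟩)) μ := by
  obtain ⟨C, hC⟩ := hbdd
  set v : ℝ≥0 := ⟨σ ^ 2, sq_nonneg σ⟩ with hv_def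
  have hvR : (v : ℝ) = σ ^ 2 := rfl
  have hvpos : (0 : ℝ) < v := by rw [hvR]; positivity
  have hv0 : v ≠ 0 := by
    intro h
    rw [h] at hvpos
    simp at hvpos
  -- continuity of the pdf in x
  have hpdf_cont : ∀ m : ℝ, Continuous (gaussianPDFReal m v) := by
    intro m
    rw [gaussianPDFReal_def]
    exact continuous_const.mul
      ((((continuous_id.sub continuous_const).pow 2).neg.div_const _).rexp)
  set K : ℝ := C * ((√(2 * π * (v:ℝ)))⁻¹ * rexp ((1 / (v:ℝ) + 1) ^ 2 * (v:ℝ)) / (v:ℝ))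
    with hK_def
  have hC0 : 0 ≤ C := le_trans (abs_nonneg _) (hC 0)
  -- integrability of the bound
  have h0 : Integrable (fun x : ℝ => rexp (-(1 / (4 * (v:ℝ))) * x ^ 2)) volume :=
    integrable_exp_neg_mul_sq (by positivity)
  have h1 : Integrable (fun x : ℝ => rexp (-(x - μ) ^ 2 / (4 * (v:ℝ)))) volume := by
    have he : (fun x : ℝ => rexp (-(x - μ) ^ 2 / (4 * (v:ℝ))))
        = fun x : ℝ => rexp (-(1 / (4 * (v:ℝ))) * (x - μ) ^ 2) := by
      funext x; congr 1; ring
    rw [he]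
    exact h0.comp_sub_right μ
  have hbound_int : Integrable (fun x : ℝ => K * rexp (-(x - μ) ^ 2 / (4 * (v:ℝ)))) volume :=
    h1.const_mul K
  -- the uniform bound
  have hbound_le : ∀ x : ℝ, ∀ m ∈ Metric.ball μ 1,
      ‖g x * (gaussianPDFReal m v x * ((x - m) / (v:ℝ)))‖
        ≤ K * rexp (-(x - μ) ^ 2 / (4 * (v:ℝ))) := by
    intro x m hm
    have hmμ : ((x - m) - (x - μ)) ^ 2 ≤ 1 := by
      have h1' : |m - μ| < 1 := by simpa [Real.dist_eq] using Metric.mem_ball.mp hm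
      have h2' : |(x - m) - (x - μ)| ≤ 1 := by
        rw [show (x - m) - (x - μ) = -(m - μ) by ring, abs_neg]
        exact h1'.le
      calc ((x - m) - (x - μ)) ^ 2 = |(x - m) - (x - μ)| ^ 2 := (sq_abs _).symm
      _ ≤ 1 ^ 2 := pow_le_pow_left₀ (abs_nonneg _) h2' 2
      _ = 1 := one_pow 2
    have hexp := aux_exp_bound (v:ℝ) hvpos (x - μ) (x - m) hmμ
    have heq : ‖g x * (gaussianPDFReal m v x * ((x - m) / (v:ℝ)))‖
        = |g x| * ((√(2 * π * (v:ℝ)))⁻¹ *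
            (rexp (-(x - m) ^ 2 / (2 * (v:ℝ))) * |x - m|) / (v:ℝ)) := by
      rw [Real.norm_eq_abs, abs_mul, abs_mul, abs_div,
        abs_of_nonneg (gaussianPDFReal_nonneg m v x), abs_of_pos hvpos]
      rw [gaussianPDFReal]
      ring
    rw [heq, hK_def]
    calc |g x| * ((√(2 * π * (v:ℝ)))⁻¹ *
            (rexp (-(x - m) ^ 2 / (2 * (v:ℝ))) * |x - m|) / (v:ℝ))
        ≤ C * ((√(2 * π * (v:ℝ)))⁻¹ *
            (rexp ((1 / (v:ℝ) + 1) ^ 2 * (v:ℝ)) * rexp (-(x - μ) ^ 2 / (4 * (v:ℝ)))) / (v:ℝ)) := by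
          gcongr
          exact hC x
      _ = C * ((√(2 * π * (v:ℝ)))⁻¹ * rexp ((1 / (v:ℝ) + 1) ^ 2 * (v:ℝ)) / (v:ℝ)) *
            rexp (-(x - μ) ^ 2 / (4 * (v:ℝ))) := by ring
  have key := hasDerivAt_integral_of_dominated_loc_of_deriv_le (μ := volume)
      (F := fun m x => g x * gaussianPDFReal m v x)
      (F' := fun m x => g x * (gaussianPDFReal m v x * ((x - m) / (v:ℝ))))
      (x₀ := μ) (bound := fun x => K * rexp (-(x - μ) ^ 2 / (4 * (v:ℝ)))) (Metric.ball_mem_nhds μ one_pos)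
      (Filter.Eventually.of_forall fun m =>
        (hcont.mul (hpdf_cont m)).aestronglyMeasurable)
      ((integrable_gaussianPDFReal μ v).bdd_mul hcont.aestronglyMeasurable
        (c := C) (ae_of_all _ fun x => by simpa using hC x))
      ((hcont.mul ((hpdf_cont μ).mul
        ((continuous_id.sub continuous_const).div_const _))).aestronglyMeasurable)
      (ae_of_all _ hbound_le) hbound_int
      (ae_of_all _ fun x m hm =>
        (aux_hasDerivAt_gaussianPDFReal v (by positivity) x m).const_mul (g x))
  obtain ⟨-, hder⟩ := key
  have hfun : (fun m : ℝ => ∫ x : ℝ, g x ∂(gaussianReal m v))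
      = fun m : ℝ => ∫ x : ℝ, g x * gaussianPDFReal m v x :=
    funext fun m => aux_integral_gaussianReal_eq m v hv0 g
  rw [hfun, aux_integral_gaussianReal_eq μ v hv0, ← integral_const_mul]
  have hval : (fun x : ℝ => 1 / σ ^ 2 * (g x * (x - μ) * gaussianPDFReal μ v x))
      = fun x : ℝ => g x * (gaussianPDFReal μ v x * ((x - μ) / (v:ℝ))) :=
    funext fun x => by rw [hvR]; ring
  rw [hval]
  exact hder
end

section
/- Let g : ℝ → ℝ be differentiable with globally Lipschitz derivative, let μ ∈ ℝ, σ > 0, and let N ≥ 1. If η⁽¹⁾, …, η⁽ᴺ⁾ are independent random variables each distributed as the Gaussian N(μ, σ²) on ℝ, then the N-sample ES gradient estimator ĝ = (1/(N σ²)) Σ_{j=1}^N g(η⁽ʲ⁾)(η⁽ʲ⁾ − μ) satisfies E[ĝ] = ∫_ℝ g′(x) dN(μ, σ²)(x) = F_σ′(μ), the derivative of the Gaussian-smoothed objective F_σ(μ) = ∫_ℝ g dN(μ, σ²). (Unbiasedness of the N-sample estimator in Eqn. (4) of Algorithm 1 for the gradient of the smoothed meta-objective.) -/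
open MeasureTheory ProbabilityTheory Real

lemma integrable_abs_pow_mul_exp {b : ℝ} (hb : 0 < b) (n : ℕ) :
    Integrable (fun x : ℝ => |x| ^ n * Real.exp (-b * x ^ 2)) := by
  have hb2 : (0:ℝ) < b / 2 := by linarith
  refine Integrable.mono' ((integrable_exp_neg_mul_sq hb2).const_mul
      ((n.factorial : ℝ) * Real.exp (1 / (2 * b)))) ?_ ?_
  · exact ((continuous_abs.pow n).mul
      ((continuous_const.mul (continuous_pow 2)).rexp)).aestronglyMeasurable
  · filter_upwards with x
    have h1 : |x| ^ n ≤ (n.factorial : ℝ) * Real.exp |x| := by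
      have hs := Real.sum_le_exp_of_nonneg (abs_nonneg x) (n + 1)
      have hterm : |x| ^ n / (n.factorial : ℝ) ≤
          ∑ i ∈ Finset.range (n + 1), |x| ^ i / (i.factorial : ℝ) :=
        Finset.single_le_sum (f := fun i => |x| ^ i / (i.factorial : ℝ))
          (fun i _ => by positivity) (Finset.self_mem_range_succ n)
      have h := hterm.trans hs
      rw [div_le_iff₀ (by positivity)] at h
      linarith [h, mul_comm (Real.exp |x|) (n.factorial : ℝ)]
    have h2 : |x| ≤ b / 2 * x ^ 2 + 1 / (2 * b) := by
      rw [← sub_nonneg, show b / 2 * x ^ 2 + 1 / (2 * b) - |x| = (b * |x| - 1) ^ 2 / (2 * b) by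
        field_simp; ring_nf; rw [sq_abs]]
      positivity
    calc ‖|x| ^ n * Real.exp (-b * x ^ 2)‖ = |x| ^ n * Real.exp (-b * x ^ 2) := by
          rw [Real.norm_eq_abs, abs_of_nonneg (by positivity)]
      _ ≤ ((n.factorial : ℝ) * Real.exp |x|) * Real.exp (-b * x ^ 2) :=
          mul_le_mul_of_nonneg_right h1 (Real.exp_pos _).le
      _ = (n.factorial : ℝ) * Real.exp (|x| + -b * x ^ 2) := by
          rw [mul_assoc, ← Real.exp_add]
      _ ≤ (n.factorial : ℝ) * Real.exp (1 / (2 * b) + -(b / 2) * x ^ 2) := by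
          refine mul_le_mul_of_nonneg_left (Real.exp_le_exp.2 (by linarith)) (by positivity)
      _ = (n.factorial : ℝ) * Real.exp (1 / (2 * b)) * Real.exp (-(b / 2) * x ^ 2) := by
          rw [mul_assoc, ← Real.exp_add]

lemma integrable_abs_pow_sub_mul_exp {b : ℝ} (hb : 0 < b) (μ : ℝ) (n : ℕ) :
    Integrable (fun x : ℝ => |x - μ| ^ n * Real.exp (-b * (x - μ) ^ 2)) :=
  (integrable_abs_pow_mul_exp hb n).comp_sub_right μ

lemma integrable_of_cubic_bound {f : ℝ → ℝ} (hf : Continuous f) {b : ℝ} (hb : 0 < b) (μ : ℝ)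
    {a0 a1 a2 a3 : ℝ}
    (hbound : ∀ x, |f x| ≤ (a0 + a1 * |x - μ| + a2 * |x - μ| ^ 2 + a3 * |x - μ| ^ 3)
        * Real.exp (-b * (x - μ) ^ 2)) :
    Integrable f := by
  refine Integrable.mono'
    ((((integrable_abs_pow_sub_mul_exp hb μ 0).const_mul a0).add
        ((integrable_abs_pow_sub_mul_exp hb μ 1).const_mul a1)).add
      (((integrable_abs_pow_sub_mul_exp hb μ 2).const_mul a2).add
        ((integrable_abs_pow_sub_mul_exp hb μ 3).const_mul a3)))
    hf.aestronglyMeasurable ?_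
  filter_upwards with x
  rw [Real.norm_eq_abs]
  exact (hbound x).trans_eq (by simp only [Pi.add_apply]; ring)
lemma stein_aux (g : ℝ → ℝ) (μ σ : ℝ) (hσ : 0 < σ) (hg : Differentiable ℝ g)
    (K : NNReal) (hK : LipschitzWith K (deriv g)) :
    Integrable (fun x => g x * (x - μ) * gaussianPDFReal μ ⟨σ ^ 2, sq_nonneg σ⟩ x) ∧
    Integrable (fun x => deriv g x * gaussianPDFReal μ ⟨σ ^ 2, sq_nonneg σ⟩ x) ∧
    ∫ x, g x * (x - μ) * gaussianPDFReal μ ⟨σ ^ 2, sq_nonneg σ⟩ x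
      = σ ^ 2 * ∫ x, deriv g x * gaussianPDFReal μ ⟨σ ^ 2, sq_nonneg σ⟩ x := by
  set v : ℝ := σ ^ 2 with hv_def
  have hv : 0 < v := pow_pos hσ 2
  set c : ℝ := (Real.sqrt (2 * π * v))⁻¹ with hc_def
  have hc : 0 < c := by
    rw [hc_def]
    exact inv_pos.2 (Real.sqrt_pos.2 (by positivity))
  set b : ℝ := (2 * v)⁻¹ with hb_def
  have hb : 0 < b := by rw [hb_def]; positivity
  have hrw : gaussianPDFReal μ ⟨σ ^ 2, sq_nonneg σ⟩
      = fun x => c * Real.exp (-b * (x - μ) ^ 2) := by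
    funext x
    simp only [gaussianPDFReal, NNReal.coe_mk, hc_def, hb_def, hv_def]
    congr 1
    field_simp
    rfl
  rw [hrw]
  set ψ : ℝ → ℝ := fun x => c * Real.exp (-b * (x - μ) ^ 2) with hψ_def
  have hψ_nonneg : ∀ x, 0 ≤ ψ x := fun x => by positivity
  have hψ_cont : Continuous ψ :=
    continuous_const.mul (continuous_const.mul ((continuous_id.sub continuous_const).pow 2)).rexp
  -- derivative of ψ
  have hψ_deriv : ∀ x, HasDerivAt ψ (-((x - μ) / v) * ψ x) x := by
    intro x
    have h1 : HasDerivAt (fun x : ℝ => -b * (x - μ) ^ 2)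
        (-b * ((2 : ℕ) * (x - μ) ^ 1 * 1)) x :=
      (((hasDerivAt_id x).sub_const μ).pow 2).const_mul (-b)
    have h2 := (h1.exp).const_mul c
    convert h2 using 1
    · rfl
    · rfl
    simp only [hψ_def, hb_def]
    field_simp
    ring
  -- growth bounds
  set A0 : ℝ := |g μ| with hA0
  set A1 : ℝ := |deriv g μ| with hA1
  set Kr : ℝ := (K : ℝ) with hKr
  have hKr0 : 0 ≤ Kr := K.coe_nonneg
  have hA00 : 0 ≤ A0 := abs_nonneg _
  have hA10 : 0 ≤ A1 := abs_nonneg _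
  have hd : ∀ x, |deriv g x| ≤ A1 + Kr * |x - μ| := by
    intro x
    have h := hK.dist_le_mul x μ
    rw [Real.dist_eq, Real.dist_eq] at h
    have h2 : |deriv g x| ≤ |deriv g x - deriv g μ| + |deriv g μ| := by
      calc |deriv g x| = |(deriv g x - deriv g μ) + deriv g μ| := by ring_nf
        _ ≤ |deriv g x - deriv g μ| + |deriv g μ| := abs_add_le _ _
    linarith
  have hgb : ∀ x, |g x| ≤ A0 + A1 * |x - μ| + Kr * |x - μ| ^ 2 := by
    intro x
    have key : ‖g x - g μ‖ ≤ (A1 + Kr * |x - μ|) * ‖x - μ‖ := by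
      refine Convex.norm_image_sub_le_of_norm_deriv_le (fun y _ => hg y) ?_
        (convex_uIcc μ x) Set.left_mem_uIcc Set.right_mem_uIcc
      intro y hy
      have hyμ : |y - μ| ≤ |x - μ| := by
        rcases le_total μ x with h | h
        · rw [Set.uIcc_of_le h] at hy
          rw [abs_of_nonneg (by linarith [hy.1]), abs_of_nonneg (by linarith [h])]
          linarith [hy.2]
        · rw [Set.uIcc_of_ge h] at hy
          rw [abs_of_nonpos (by linarith [hy.2]), abs_of_nonpos (by linarith [h])]
          linarith [hy.1]
      have := hd y
      rw [Real.norm_eq_abs]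
      nlinarith
    rw [Real.norm_eq_abs, Real.norm_eq_abs] at key
    have h2 : |g x| ≤ |g x - g μ| + |g μ| := by
      calc |g x| = |(g x - g μ) + g μ| := by ring_nf
        _ ≤ |g x - g μ| + |g μ| := abs_add_le _ _
    nlinarith [abs_nonneg (x - μ)]
  -- integrability
  have int1 : Integrable (fun x => g x * (x - μ) * ψ x) := by
    refine integrable_of_cubic_bound
      ((hg.continuous.mul (continuous_id.sub continuous_const)).mul hψ_cont) hb μ
      (a0 := 0) (a1 := c * A0) (a2 := c * A1) (a3 := c * Kr) ?_
    intro x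
    have hpe : (0:ℝ) ≤ c * Real.exp (-b * (x - μ) ^ 2) := by positivity
    calc |g x * (x - μ) * ψ x| = |g x| * (|x - μ| * (c * Real.exp (-b * (x - μ) ^ 2))) := by
          rw [abs_mul, abs_mul, abs_of_nonneg hpe]; ring
      _ ≤ (A0 + A1 * |x - μ| + Kr * |x - μ| ^ 2)
            * (|x - μ| * (c * Real.exp (-b * (x - μ) ^ 2))) := by
          refine mul_le_mul_of_nonneg_right (hgb x) (by positivity)
      _ = (0 + c * A0 * |x - μ| + c * A1 * |x - μ| ^ 2 + c * Kr * |x - μ| ^ 3)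
            * Real.exp (-b * (x - μ) ^ 2) := by ring
  have int2 : Integrable (fun x => deriv g x * ψ x) := by
    refine integrable_of_cubic_bound (hK.continuous.mul hψ_cont) hb μ
      (a0 := c * A1) (a1 := c * Kr) (a2 := 0) (a3 := 0) ?_
    intro x
    have hpe : (0:ℝ) ≤ c * Real.exp (-b * (x - μ) ^ 2) := by positivity
    calc |deriv g x * ψ x| = |deriv g x| * (c * Real.exp (-b * (x - μ) ^ 2)) := by
          rw [abs_mul, abs_of_nonneg hpe]
      _ ≤ (A1 + Kr * |x - μ|) * (c * Real.exp (-b * (x - μ) ^ 2)) :=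
          mul_le_mul_of_nonneg_right (hd x) hpe
      _ = (c * A1 + c * Kr * |x - μ| + 0 * |x - μ| ^ 2 + 0 * |x - μ| ^ 3)
            * Real.exp (-b * (x - μ) ^ 2) := by ring
  have intH : Integrable (fun x => -v * (g x * ψ x)) := by
    refine integrable_of_cubic_bound (continuous_const.mul (hg.continuous.mul hψ_cont)) hb μ
      (a0 := v * c * A0) (a1 := v * c * A1) (a2 := v * c * Kr) (a3 := 0) ?_
    intro x
    have hpe : (0:ℝ) ≤ c * Real.exp (-b * (x - μ) ^ 2) := by positivity
    calc |(-v) * (g x * ψ x)| = v * (|g x| * (c * Real.exp (-b * (x - μ) ^ 2))) := by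
          rw [abs_mul, abs_mul, abs_of_nonneg hpe, abs_neg, abs_of_nonneg hv.le]; try ring
      _ ≤ v * ((A0 + A1 * |x - μ| + Kr * |x - μ| ^ 2)
            * (c * Real.exp (-b * (x - μ) ^ 2))) := by
          exact mul_le_mul_of_nonneg_left (mul_le_mul_of_nonneg_right (hgb x) hpe) hv.le
      _ = (v * c * A0 + v * c * A1 * |x - μ| + v * c * Kr * |x - μ| ^ 2 + 0 * |x - μ| ^ 3)
            * Real.exp (-b * (x - μ) ^ 2) := by ring
  have intH' : Integrable (fun x => -v * (deriv g x * ψ x) + g x * (x - μ) * ψ x) :=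
    (int2.const_mul (-v)).add int1
  have hH : ∀ x, HasDerivAt (fun x => -v * (g x * ψ x))
      (-v * (deriv g x * ψ x) + g x * (x - μ) * ψ x) x := by
    intro x
    have h := ((hg x).hasDerivAt.mul (hψ_deriv x)).const_mul (-v)
    convert h using 1
    · rfl
    · rfl
    · rfl
    field_simp
    ring
  have hzero : ∫ x, (-v * (deriv g x * ψ x) + g x * (x - μ) * ψ x) = 0 :=
    integral_eq_zero_of_hasDerivAt_of_integrable hH intH' intH
  rw [integral_add (int2.const_mul (-v)) int1, integral_const_mul] at hzero
  exact ⟨int1, int2, by rw [show (σ:ℝ) ^ 2 = v from rfl]; linear_combination hzero⟩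

lemma gauss_var_ne_zero {σ : ℝ} (hσ : 0 < σ) : (⟨σ ^ 2, sq_nonneg σ⟩ : NNReal) ≠ 0 := by
  intro h
  have := congrArg NNReal.toReal h
  change σ ^ 2 = 0 at this
  exact (pow_pos hσ 2).ne' this

lemma gauss_pdf_coe (μ : ℝ) (v : NNReal) :
    gaussianPDF μ v = fun x => (((gaussianPDFReal μ v x).toNNReal : NNReal) : ENNReal) := rfl

lemma gaussian_integral_conv {μ σ : ℝ} (hσ : 0 < σ) (f : ℝ → ℝ) :
    ∫ x, f x ∂(gaussianReal μ ⟨σ ^ 2, sq_nonneg σ⟩)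
      = ∫ x, f x * gaussianPDFReal μ ⟨σ ^ 2, sq_nonneg σ⟩ x := by
  rw [gaussianReal_of_var_ne_zero μ (gauss_var_ne_zero hσ), gauss_pdf_coe μ ⟨σ ^ 2, sq_nonneg σ⟩]
  erw [
    integral_withDensity_eq_integral_smul
      ((measurable_gaussianPDFReal μ _).real_toNNReal) f]
  refine integral_congr_ae (ae_of_all _ fun x => ?_)
  simp only [NNReal.smul_def, NNReal.coe_mk,
    Real.coe_toNNReal _ (gaussianPDFReal_nonneg μ _ x), smul_eq_mul]
  erw [Real.coe_toNNReal _ (gaussianPDFReal_nonneg _ _ x)]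
  ring

lemma gaussian_integrable_conv {μ σ : ℝ} (hσ : 0 < σ) {f : ℝ → ℝ}
    (h : Integrable (fun x => f x * gaussianPDFReal μ ⟨σ ^ 2, sq_nonneg σ⟩ x)) :
    Integrable f (gaussianReal μ ⟨σ ^ 2, sq_nonneg σ⟩) := by
  rw [gaussianReal_of_var_ne_zero μ (gauss_var_ne_zero hσ), gauss_pdf_coe μ ⟨σ ^ 2, sq_nonneg σ⟩]
  erw [
    integrable_withDensity_iff_integrable_smul
      ((measurable_gaussianPDFReal μ _).real_toNNReal)]
  refine h.congr (ae_of_all _ fun x => ?_)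
  simp only [NNReal.smul_def, Real.coe_toNNReal _ (gaussianPDFReal_nonneg μ _ x), smul_eq_mul]
  erw [Real.coe_toNNReal _ (gaussianPDFReal_nonneg _ _ x)]
  ring

/-- Unbiasedness of the N-sample ES gradient estimator of Eqn. (4) of Algorithm 1: for
`g : ℝ → ℝ` differentiable with globally Lipschitz derivative, `σ > 0`, and i.i.d. samples
`η⁽¹⁾, …, η⁽ᴺ⁾ ~ N(μ, σ²)`, the estimator `ĝ = (1/(Nσ²)) Σ_j g(η⁽ʲ⁾)(η⁽ʲ⁾ − μ)` satisfies
`E[ĝ] = ∫ g′ dN(μ, σ²) = F_σ′(μ)`, the derivative of the Gaussian-smoothed objective. -/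
theorem es_estimator_unbiased (g : ℝ → ℝ) (μ σ : ℝ) (hσ : 0 < σ)
    (hg : Differentiable ℝ g) (hLip : ∃ K : NNReal, LipschitzWith K (deriv g))
    (N : ℕ) (hN : 1 ≤ N)
    (Ω : Type*) [MeasurableSpace Ω] (P : Measure Ω) [IsProbabilityMeasure P]
    (η : Fin N → Ω → ℝ) (hmeas : ∀ j, Measurable (η j))
    (hindep : iIndepFun η P)
    (hlaw : ∀ j, Measure.map (η j) P = gaussianReal μ ⟨σ ^ 2, sq_nonneg σ⟩) :
    ∫ ω, (1 / (N * σ ^ 2)) * ∑ j : Fin N, g (η j ω) * (η j ω - μ) ∂P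
      = ∫ x : ℝ, deriv g x ∂(gaussianReal μ ⟨σ ^ 2, sq_nonneg σ⟩) := by
  obtain ⟨K, hK⟩ := hLip
  obtain ⟨int1, int2, hstein⟩ := stein_aux g μ σ hσ hg K hK
  have hFcont : Continuous (fun x : ℝ => g x * (x - μ)) :=
    hg.continuous.mul (continuous_id.sub continuous_const)
  have hFint_γ : Integrable (fun x : ℝ => g x * (x - μ))
      (gaussianReal μ ⟨σ ^ 2, sq_nonneg σ⟩) := gaussian_integrable_conv hσ int1
  have hIj : ∀ j, Integrable (fun ω => g (η j ω) * (η j ω - μ)) P := by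
    intro j
    have h := (integrable_map_measure (f := η j) (μ := P)
      hFcont.aestronglyMeasurable (hmeas j).aemeasurable).mp
      (by rw [hlaw j]; exact hFint_γ)
    exact h
  have hval : ∀ j : Fin N, ∫ ω, g (η j ω) * (η j ω - μ) ∂P
      = σ ^ 2 * ∫ x : ℝ, deriv g x ∂(gaussianReal μ ⟨σ ^ 2, sq_nonneg σ⟩) := by
    intro j
    have h1 : ∫ ω, g (η j ω) * (η j ω - μ) ∂P
        = ∫ x, g x * (x - μ) ∂(Measure.map (η j) P) :=
      (integral_map (hmeas j).aemeasurable hFcont.aestronglyMeasurable).symm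
    rw [h1, hlaw j, gaussian_integral_conv hσ, hstein,
      ← gaussian_integral_conv hσ (deriv g)]
  rw [integral_const_mul, integral_finset_sum Finset.univ (fun j _ => hIj j),
    Finset.sum_congr rfl (fun j _ => hval j), Finset.sum_const, Finset.card_univ,
    Fintype.card_fin, nsmul_eq_mul]
  have hN0 : (N : ℝ) ≠ 0 := Nat.cast_ne_zero.2 (by omega)
  have hσ0 : σ ^ 2 ≠ 0 := (pow_pos hσ 2).ne'
  field_simp
end
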